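/- If G is a nontrivial finite group, then ω(G) = 2 if and only if G is an elementary abelian p-group for some prime p. -/

import Mathlib

/-- The number of automorphism orbits of a group `G`: the number of orbits of the
natural action of `Aut(G)` on `G`. -/
noncomputable def omegaOrbits (G : Type*) [Group G] : ℕ :=
  Nat.card (Quotient (MulAction.orbitRel (MulAut G) G))

/-- `G` is an FC-group: every element has a finite conjugacy class. -/
def IsFCGroup (G : Type*) [Group G] : Prop :=
  ∀ g : G, {h : G | IsConj g h}.Finite

/-- `G` has finitely many automorphism orbits. -/
def HasFinitelyManyAutOrbits (G : Type*) [Group G] : Prop :=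
  Finite (Quotient (MulAction.orbitRel (MulAut G) G))

open MulAction

-- transitivity of GL on nonzero vectors of a finite vector space
lemma exists_linearEquiv_map {K V : Type*} [Field K] [AddCommGroup V] [Module K V] [Finite V]
    {x y : V} (hx : x ≠ 0) (hy : y ≠ 0) : ∃ e : V ≃ₗ[K] V, e x = y := by
  have := Fintype.ofFinite V
  have hxi : LinearIndepOn K id ({x} : Set V) := (linearIndepOn_singleton_iff K).mpr hx
  have hyi : LinearIndepOn K id ({y} : Set V) := (linearIndepOn_singleton_iff K).mpr hy
  let b := Module.Basis.extend hxi
  let c := Module.Basis.extend hyi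
  have := Fintype.ofFinite (hxi.extend (Set.subset_univ _))
  have := Fintype.ofFinite (hyi.extend (Set.subset_univ _))
  have hcard : Fintype.card (hxi.extend (Set.subset_univ _))
      = Fintype.card (hyi.extend (Set.subset_univ _)) := by
    rw [← Module.finrank_eq_card_basis b, ← Module.finrank_eq_card_basis c]
  have hxs : x ∈ hxi.extend (Set.subset_univ _) :=
    hxi.subset_extend _ (Set.mem_singleton x)
  have hys : y ∈ hyi.extend (Set.subset_univ _) :=
    hyi.subset_extend _ (Set.mem_singleton y)
  have : DecidableEq ↑(hyi.extend (Set.subset_univ _)) := fun a b => Classical.dec _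
  let e0 := Fintype.equivOfCardEq hcard
  let σ := e0.trans (Equiv.swap (e0 ⟨x, hxs⟩) ⟨y, hys⟩)
  refine ⟨b.equiv c σ, ?_⟩
  have hb : b ⟨x, hxs⟩ = x := Module.Basis.extend_apply_self hxi ⟨x, hxs⟩
  have hc : c ⟨y, hys⟩ = y := Module.Basis.extend_apply_self hyi ⟨y, hys⟩
  calc (b.equiv c σ) x = (b.equiv c σ) (b ⟨x, hxs⟩) := by rw [hb]
    _ = c (σ ⟨x, hxs⟩) := b.equiv_apply _ c σ
    _ = y := by simp [σ, Equiv.swap_apply_left, hc]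

lemma orbit_one_eq {G : Type*} [Group G] : orbit (MulAut G) (1 : G) = {1} := by
  ext g
  simp only [mem_orbit_iff, Set.mem_singleton_iff]
  constructor
  · rintro ⟨φ, rfl⟩; simp [MulAut.smul_def]
  · rintro rfl; exact ⟨1, by simp [MulAut.smul_def]⟩

theorem stmt1' (G : Type*) [Group G] [Finite G] [Nontrivial G] :
    Nat.card (Quotient (MulAction.orbitRel (MulAut G) G)) = 2 ↔
      ∃ p : ℕ, p.Prime ∧ (∀ a b : G, a * b = b * a) ∧ ∀ g : G, g ^ p = 1 := by
  have hone : ∀ g : G, g ≠ 1 →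
      (Quotient.mk'' g : Quotient (MulAction.orbitRel (MulAut G) G)) ≠ Quotient.mk'' 1 := by
    intro g hg h
    rw [Quotient.eq'', MulAction.orbitRel_apply, orbit_one_eq] at h
    exact hg h
  constructor
  · intro hcard
    -- transitivity on nontrivial elements
    have htrans : ∀ g h : G, g ≠ 1 → h ≠ 1 → ∃ φ : MulAut G, φ g = h := by
      intro g h hg hh
      obtain ⟨y, hy, huniq⟩ := (Nat.card_eq_two_iff'
        (Quotient.mk'' (1 : G) : Quotient (MulAction.orbitRel (MulAut G) G))).mp hcard
      have h1 : (Quotient.mk'' g : Quotient (MulAction.orbitRel (MulAut G) G))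
          = Quotient.mk'' h := by
        rw [huniq _ (hone g hg), huniq _ (hone h hh)]
      rw [Quotient.eq'', MulAction.orbitRel_apply, mem_orbit_iff] at h1
      obtain ⟨φ, hφ⟩ := h1
      exact ⟨φ.symm, by rw [MulAut.smul_def] at hφ; rw [← hφ]; exact φ.symm_apply_apply h⟩
    -- element of prime order
    have := Fintype.ofFinite G
    obtain ⟨p, hp, hdvd⟩ := (Fintype.card G).exists_prime_and_dvd
      (by have := Fintype.one_lt_card (α := G); omega)
    haveI : Fact p.Prime := ⟨hp⟩
    obtain ⟨g0, hg0⟩ := exists_prime_orderOf_dvd_card p hdvd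
    have hg0ne : g0 ≠ 1 := by
      intro h; rw [h, orderOf_one] at hg0; exact hp.one_lt.ne' hg0.symm
    have hexp : ∀ g : G, g ^ p = 1 := by
      intro g
      rcases eq_or_ne g 1 with rfl | hg
      · simp
      · obtain ⟨φ, hφ⟩ := htrans g0 g hg0ne hg
        rw [← hφ, ← map_pow, ← hg0, pow_orderOf_eq_one, map_one]
    -- abelian via center
    have hpg : IsPGroup p G := fun g => ⟨1, by simpa using hexp g⟩
    obtain ⟨z, hz⟩ := @exists_ne _ hpg.center_nontrivial (1 : Subgroup.center G)
    have hzc : ∀ b : G, (z : G) * b = b * (z : G) :=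
      fun b => (Subgroup.mem_center_iff.mp z.2 b).symm
    have hzne : (z : G) ≠ 1 := fun h => hz (Subtype.ext h)
    have hcen : ∀ a : G, a ≠ 1 → ∀ b : G, a * b = b * a := by
      intro a ha b
      obtain ⟨φ, hφ⟩ := htrans (z : G) a hzne ha
      have : b = φ (φ.symm b) := (φ.apply_symm_apply b).symm
      rw [← hφ, this, ← map_mul, ← map_mul, hzc]
    refine ⟨p, hp, fun a b => ?_, hexp⟩
    rcases eq_or_ne a 1 with rfl | ha
    · simp
    · exact hcen a ha b
  · rintro ⟨p, hp, hcomm, hexp⟩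
    haveI : Fact p.Prime := ⟨hp⟩
    letI : CommGroup G := { ‹Group G› with mul_comm := hcomm }
    letI : Module (ZMod p) (Additive G) := AddCommGroup.zmodModule (n := p)
      (by intro x; show Additive.ofMul (Additive.toMul x ^ p) = 0; rw [hexp]; rfl)
    have htrans : ∀ g h : G, g ≠ 1 → h ≠ 1 → ∃ φ : MulAut G, φ g = h := by
      intro g h hg hh
      have hx : (Additive.ofMul g : Additive G) ≠ 0 := hg
      have hy : (Additive.ofMul h : Additive G) ≠ 0 := hh
      obtain ⟨e, he⟩ := exists_linearEquiv_map (K := ZMod p) hx hy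
      exact ⟨MulEquiv.toAdditive.symm e.toAddEquiv, he⟩
    obtain ⟨g0, hg0⟩ := exists_ne (1 : G)
    rw [Nat.card_eq_two_iff' (Quotient.mk'' (1 : G))]
    refine ⟨Quotient.mk'' g0, hone g0 hg0, ?_⟩
    intro y hy
    obtain ⟨h, rfl⟩ := Quotient.exists_rep y
    have hh : h ≠ 1 := by
      intro h1; subst h1; exact hy rfl
    obtain ⟨φ, hφ⟩ := htrans g0 h hg0 hh
    exact Quotient.sound (MulAction.orbitRel_apply.mpr ⟨φ, hφ⟩)

theorem stmt1 (G : Type*) [Group G] [Finite G] [Nontrivial G] :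
    omegaOrbits G = 2 ↔
      ∃ p : ℕ, p.Prime ∧ (∀ a b : G, a * b = b * a) ∧ ∀ g : G, g ^ p = 1 := by
  rw [omegaOrbits]; exact stmt1' G
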